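/- For distinct nonzero complex numbers λ₁, λ₂, the 4×4 matrix with rows (0,-1,0,-1), (-λ₂,-λ₂,-λ₁,-λ₁), (-2λ₂²,-λ₂²,-2λ₁²,-λ₁²), (-3λ₂³,-λ₂³,-3λ₁³,-λ₁³) is invertible. -/

import Mathlib

theorem stmt5 (l1 l2 : ℂ) (h1 : l1 ≠ 0) (h2 : l2 ≠ 0) (h12 : l1 ≠ l2) :
    IsUnit (!![(0 : ℂ), -1, 0, -1;
               -l2, -l2, -l1, -l1;
               -2*l2^2, -l2^2, -2*l1^2, -l1^2;
               -3*l2^3, -l2^3, -3*l1^3, -l1^3]) := by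
  rw [Matrix.isUnit_iff_isUnit_det, isUnit_iff_ne_zero]
  have hd : (!![(0 : ℂ), -1, 0, -1;
               -l2, -l2, -l1, -l1;
               -2*l2^2, -l2^2, -2*l1^2, -l1^2;
               -3*l2^3, -l2^3, -3*l1^3, -l1^3]).det
      = l1 * l2 * (l1 - l2)^4 := by
    simp [Matrix.det_succ_row_zero, Fin.sum_univ_succ, Fin.succAbove, show (Fin.castSucc 2 : Fin 4) = 2 from rfl]; ring
  rw [hd]
  exact mul_ne_zero (mul_ne_zero h1 h2) (pow_ne_zero _ (sub_ne_zero.mpr h12))
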